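/- Let Ĝ = GL(Gv) be the linear symmetry group of the orbit of a generator v, and let w ∈ V be generic with respect to the action of Ĝ. If the characteristic of k does not divide the order of the stabilizer of v in Ĝ, then GL(Ĝw) = Ĝ; i.e., taking the linear symmetry group of a generic orbit of Ĝ gives back Ĝ. -/

import Mathlib

open Polynomial Matrix Pointwise

section PolyKey
variable {k : Type*} [Field k] {ι : Type*} [Fintype ι] [DecidableEq ι]

lemma aux_map_one_add_smul (c : k) (A : Matrix ι ι k) :
    ((1 : Matrix ι ι k[X]) + (X : k[X]) • A.map C).map (eval c) = 1 + c • A := by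
  ext i j
  by_cases h : i = j <;>
    · simp [Matrix.map_apply, Matrix.one_apply, h, smul_eq_mul]
      ring

lemma aux_eval_mulVec (c : k) (M : Matrix ι ι k[X]) (x : ι → k[X]) (i : ι) :
    eval c ((M *ᵥ x) i) = ((M.map (eval c)) *ᵥ (fun j => eval c (x j))) i := by
  simp [Matrix.mulVec, dotProduct, Matrix.map_apply, eval_finset_sum]

lemma key_poly_lemma (A B : Matrix ι ι k) (yv sv : ι → k) (E : Set k)
    (hE : E.Infinite)
    (h : ∀ c ∈ E, (1 + c • A).det ≠ 0 ∧
      ∃ h0 : ι → k, (1 + c • A) *ᵥ h0 = yv ∧ (1 + c • B) *ᵥ h0 = sv) :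
    yv = sv := by
  set At : Matrix ι ι k[X] := 1 + (X : k[X]) • A.map C with hA
  set Bt : Matrix ι ι k[X] := 1 + (X : k[X]) • B.map C with hB
  set H : ι → k[X] := At.cramer (fun i => C (yv i)) with hH
  have fact1 : At *ᵥ H = At.det • (fun i => C (yv i)) := Matrix.mulVec_cramer _ _
  have evaldet : ∀ c : k, eval c At.det = (1 + c • A).det := by
    intro c
    have := RingHom.map_det (evalRingHom c) At
    rw [coe_evalRingHom] at this
    rw [show (evalRingHom c).mapMatrix At = At.map (eval c) from rfl] at this
    rw [this, hA, aux_map_one_add_smul]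
  have mfact : ∀ c : k, (1 + c • A) *ᵥ (fun j => eval c (H j)) = ((1 + c • A).det) • yv := by
    intro c
    funext i
    have h1 : eval c ((At *ᵥ H) i) = ((1 + c • A) *ᵥ (fun j => eval c (H j))) i := by
      rw [aux_eval_mulVec, hA, aux_map_one_add_smul]
    have h2 : eval c ((At.det • (fun i => C (yv i))) i) = (((1 + c • A).det) • yv) i := by
      simp [evaldet c, smul_eq_mul]
    rw [← h1, fact1, h2]
  have claim : Bt *ᵥ H = At.det • (fun i => C (sv i)) := by
    funext i
    apply Polynomial.eq_of_infinite_eval_eq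
    apply hE.mono
    intro c hc
    obtain ⟨hdet, h0, h01, h02⟩ := h c hc
    have hinv : ∀ x1 x2 : ι → k, (1 + c • A) *ᵥ x1 = (1 + c • A) *ᵥ x2 → x1 = x2 := by
      intro x1 x2 hx
      have hu : IsUnit (1 + c • A).det := isUnit_iff_ne_zero.mpr hdet
      have := congrArg (fun z => (1 + c • A)⁻¹ *ᵥ z) hx
      simpa [Matrix.mulVec_mulVec, Matrix.nonsing_inv_mul _ hu] using this
    have hHc : (fun j => eval c (H j)) = (1 + c • A).det • h0 := by
      apply hinv
      rw [mfact c, Matrix.mulVec_smul, h01]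
    have e1 : eval c ((Bt *ᵥ H) i) = (((1 + c • B) *ᵥ ((1 + c • A).det • h0)) i) := by
      rw [aux_eval_mulVec, hB, aux_map_one_add_smul, hHc]
    have e2 : ((1 + c • B) *ᵥ ((1 + c • A).det • h0)) i = ((1 + c • A).det • sv) i := by
      rw [Matrix.mulVec_smul, h02]
    show eval c ((Bt *ᵥ H) i) = eval c ((At.det • (fun i => C (sv i))) i)
    rw [e1, e2]
    simp [evaldet c, smul_eq_mul]
  funext i
  have hH0 : (fun j => eval 0 (H j)) = yv := by
    have := mfact 0
    simpa using this
  have lhs0 : eval 0 ((Bt *ᵥ H) i) = yv i := by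
    rw [aux_eval_mulVec, hB, aux_map_one_add_smul]
    simp [hH0]
  have rhs0 : eval 0 ((At.det • (fun i => C (sv i))) i) = sv i := by
    simp [evaldet 0]
  have := congrArg (fun p => eval 0 p) (congrFun claim i)
  rw [lhs0, rhs0] at this
  exact this

end PolyKey

/-- Let `Ĝ = GL(Gv)` be the linear symmetry group of the orbit of a
generator `v`, and let `w` be generic for `Ĝ`. If the characteristic of `k` does not
divide the order of the stabilizer of `v` in `Ĝ`, then `GL(Ĝw) = Ĝ`. -/
theorem linear_sym_group_of_generic_orbit_eq
    {k G V : Type*} [Field k] [Infinite k] [Group G] [Finite G]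
    [AddCommGroup V] [Module k V] [DistribMulAction G V] [SMulCommClass G k V]
    (v : V) (hv : Submodule.span k (MulAction.orbit G v) = ⊤)
    (Ghat : Subgroup (V ≃ₗ[k] V))
    (hGhat : (Ghat : Set (V ≃ₗ[k] V)) =
      {A : V ≃ₗ[k] V | ⇑A '' MulAction.orbit G v = MulAction.orbit G v})
    (w : V)
    -- `w` generates `V` as a module for `Ĝ`:
    (hwgen : Submodule.span k (Set.range fun A : Ghat => (A : V ≃ₗ[k] V) w) = ⊤)
    -- the stabilizer of `w` in `Ĝ` equals the kernel of the `Ĝ`-action (trivial):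
    (hwstab : ∀ A : Ghat, (A : V ≃ₗ[k] V) w = w → A = 1)
    -- every orbit symmetry of `w` (for `Ĝ`) is a generic symmetry:
    (hwsym : ∀ π : Equiv.Perm Ghat,
      (∃ B : V ≃ₗ[k] V, ∀ A : Ghat,
          B ((A : V ≃ₗ[k] V) w) = ((π A : Ghat) : V ≃ₗ[k] V) w) →
      ∀ u : V, Submodule.span k (Set.range fun A : Ghat => (A : V ≃ₗ[k] V) u) = ⊤ →
        ∃ B : V ≃ₗ[k] V, ∀ A : Ghat,
          B ((A : V ≃ₗ[k] V) u) = ((π A : Ghat) : V ≃ₗ[k] V) u)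
    -- the characteristic of `k` does not divide the order of the stabilizer of `v` in `Ĝ`:
    (hchar : (Nat.card {A : Ghat // (A : V ≃ₗ[k] V) v = v} : k) ≠ 0) :
    {B : V ≃ₗ[k] V |
        ⇑B '' (Set.range fun A : Ghat => (A : V ≃ₗ[k] V) w) =
          Set.range fun A : Ghat => (A : V ≃ₗ[k] V) w} =
      (Ghat : Set (V ≃ₗ[k] V)) := by
  classical
  -- basic coe lemma
  have coe_mul_apply : ∀ (A B : Ghat) (x : V), ((A * B : Ghat) : V ≃ₗ[k] V) x
      = (A : V ≃ₗ[k] V) ((B : V ≃ₗ[k] V) x) := fun _ _ _ => rfl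
  -- injectivity of A ↦ A w
  have winj : ∀ A₁ A₂ : Ghat, (A₁ : V ≃ₗ[k] V) w = (A₂ : V ≃ₗ[k] V) w → A₁ = A₂ := by
    intro A₁ A₂ h
    have h1 : ((A₂⁻¹ * A₁ : Ghat) : V ≃ₗ[k] V) w = w := by
      rw [coe_mul_apply, h]
      exact (A₂ : V ≃ₗ[k] V).symm_apply_apply w
    exact (inv_mul_eq_one.mp (hwstab _ h1)).symm
  -- each element of Ghat permutes the orbit of v
  have hmemimg : ∀ (A : Ghat), ⇑(A : V ≃ₗ[k] V) '' MulAction.orbit G v = MulAction.orbit G v := by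
    intro A
    have := A.2
    rw [← SetLike.mem_coe, hGhat] at this
    exact this
  have horbA : ∀ (A : Ghat) x, x ∈ MulAction.orbit G v → (A : V ≃ₗ[k] V) x ∈ MulAction.orbit G v := by
    intro A x hx
    rw [← hmemimg A]
    exact Set.mem_image_of_mem _ hx
  -- G elements as elements of Ghat
  have gmem : ∀ g : G, DistribMulAction.toLinearEquiv k V g ∈ Ghat := by
    intro g
    rw [← SetLike.mem_coe, hGhat]
    show ⇑(DistribMulAction.toLinearEquiv k V g) '' MulAction.orbit G v = MulAction.orbit G v
    have : ⇑(DistribMulAction.toLinearEquiv k V g) = fun x : V => g • x := rfl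
    rw [this]
    have h2 : (fun x : V => g • x) '' MulAction.orbit G v = g • MulAction.orbit G v := rfl
    rw [h2]
    exact MulAction.smul_orbit g v
  -- the orbit of v is contained in the Ghat-orbit of v
  have horbsub : MulAction.orbit G v ⊆ Set.range fun A : Ghat => (A : V ≃ₗ[k] V) v := by
    rintro x ⟨g, rfl⟩
    exact ⟨⟨DistribMulAction.toLinearEquiv k V g, gmem g⟩, rfl⟩
  have spanAv : Submodule.span k (Set.range fun A : Ghat => (A : V ≃ₗ[k] V) v) = ⊤ := by
    refine le_antisymm le_top ?_
    rw [← hv]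
    exact Submodule.span_mono horbsub
  -- finite dimensionality
  have horbfin : (MulAction.orbit G v).Finite := Set.finite_range _
  haveI : Module.Finite k V := Module.finite_def.mpr
    ⟨horbfin.toFinset, by rw [Set.Finite.coe_toFinset]; exact hv⟩
  -- the stabilizer of v
  have hcard_ne : Nat.card {A : Ghat // (A : V ≃ₗ[k] V) v = v} ≠ 0 := by
    intro h0
    rw [h0] at hchar
    simp at hchar
  haveI hSfin : Finite {A : Ghat // (A : V ≃ₗ[k] V) v = v} := (Nat.card_ne_zero.mp hcard_ne).2
  haveI : Fintype {A : Ghat // (A : V ≃ₗ[k] V) v = v} := Fintype.ofFinite _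
  set m : ℕ := Nat.card {A : Ghat // (A : V ≃ₗ[k] V) v = v} with hm
  -- basis of V made of vectors A v
  obtain ⟨bset, hbsub, hbspan, hbindep⟩ :=
    exists_linearIndependent k (Set.range fun A : Ghat => (A : V ≃ₗ[k] V) v)
  have hbtop : Submodule.span k (Set.range (Subtype.val : bset → V)) = ⊤ := by
    rw [Subtype.range_coe]
    rw [hbspan, spanAv]
  let B₀ : Module.Basis bset k V := Module.Basis.mk hbindep (hbtop ▸ le_rfl)
  haveI : Fintype bset := FiniteDimensional.fintypeBasisIndex B₀
  have hαex : ∀ i : bset, ∃ A : Ghat, (A : V ≃ₗ[k] V) v = (i : V) := fun i => hbsub i.2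
  set α : bset → Ghat := fun i => Classical.choose (hαex i) with hαdef
  have hα : ∀ i : bset, ((α i : Ghat) : V ≃ₗ[k] V) v = (i : V) := fun i => Classical.choose_spec (hαex i)
  have hB₀ : ∀ i : bset, B₀ i = ((α i : Ghat) : V ≃ₗ[k] V) v := by
    intro i
    rw [Module.Basis.mk_apply, hα i]
  -- now the set equality
  ext Bx
  constructor
  · -- hard direction
    intro hBx
    have hπex : ∀ A : Ghat, ∃ A' : Ghat, Bx ((A : V ≃ₗ[k] V) w) = (A' : V ≃ₗ[k] V) w := by
      intro A
      have hmem : Bx ((A : V ≃ₗ[k] V) w) ∈ Set.range (fun A : Ghat => (A : V ≃ₗ[k] V) w) := by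
        rw [← hBx]
        exact Set.mem_image_of_mem _ ⟨A, rfl⟩
      obtain ⟨A', hA'⟩ := hmem
      exact ⟨A', hA'.symm⟩
    set f : Ghat → Ghat := fun A => Classical.choose (hπex A) with hfdef
    have hf : ∀ A : Ghat, Bx ((A : V ≃ₗ[k] V) w) = ((f A : Ghat) : V ≃ₗ[k] V) w :=
      fun A => Classical.choose_spec (hπex A)
    have hfinj : Function.Injective f := by
      intro A₁ A₂ h
      apply winj
      apply Bx.injective
      rw [hf A₁, hf A₂, h]
    have hfsurj : Function.Surjective f := by
      intro A'
      have hmem : ((A' : Ghat) : V ≃ₗ[k] V) w ∈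
          ⇑Bx '' Set.range (fun A : Ghat => (A : V ≃ₗ[k] V) w) := by
        rw [hBx]; exact ⟨A', rfl⟩
      obtain ⟨x, ⟨A, rfl⟩, hx⟩ := hmem
      exact ⟨A, winj _ _ (by rw [← hf A, hx])⟩
    set π : Equiv.Perm Ghat := Equiv.ofBijective f ⟨hfinj, hfsurj⟩ with hπdef
    have hπ : ∀ A : Ghat, Bx ((A : V ≃ₗ[k] V) w) = ((π A : Ghat) : V ≃ₗ[k] V) w := hf
    obtain ⟨B', hB'⟩ := hwsym π ⟨Bx, hπ⟩ v spanAv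
    have bmem : B' ∈ Ghat := by
      rw [← SetLike.mem_coe, hGhat]
      show ⇑B' '' MulAction.orbit G v = MulAction.orbit G v
      apply Set.Subset.antisymm
      · rintro x ⟨y, hy, rfl⟩
        obtain ⟨g, hg⟩ := hy
        have h1 : B' y = ((π ⟨_, gmem g⟩ : Ghat) : V ≃ₗ[k] V) v := by
          rw [← hB']
          congr 1
          exact hg.symm
        rw [h1]
        exact horbA _ v (MulAction.mem_orbit_self v)
      · intro x hx
        obtain ⟨g, rfl⟩ := hx
        refine ⟨((π.symm ⟨_, gmem g⟩ : Ghat) : V ≃ₗ[k] V) v,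
          horbA _ v (MulAction.mem_orbit_self v), ?_⟩
        rw [hB' (π.symm ⟨_, gmem g⟩)]
        show ((π (π.symm ⟨_, gmem g⟩) : Ghat) : V ≃ₗ[k] V) v = g • v
        rw [Equiv.apply_symm_apply]
        rfl
    set b : Ghat := ⟨B', bmem⟩ with hbdef
    set σ : Equiv.Perm Ghat := π.trans (Equiv.mulLeft b⁻¹) with hσdef
    have hσ : ∀ A : Ghat, σ A = b⁻¹ * π A := fun A => rfl
    have σfixv : ∀ A : Ghat, ((σ A : Ghat) : V ≃ₗ[k] V) v = (A : V ≃ₗ[k] V) v := by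
      intro A
      rw [hσ A, coe_mul_apply, ← hB' A]
      exact B'.symm_apply_apply ((A : V ≃ₗ[k] V) v)
    have hCw : ∃ Bc : V ≃ₗ[k] V, ∀ A : Ghat,
        Bc ((A : V ≃ₗ[k] V) w) = ((σ A : Ghat) : V ≃ₗ[k] V) w := by
      refine ⟨Bx.trans B'.symm, ?_⟩
      intro A
      show B'.symm (Bx ((A : V ≃ₗ[k] V) w)) = _
      rw [hπ A, hσ A, coe_mul_apply]
      rfl
    have hcoset : ∀ A₀ : Ghat,
        ∑ s : {A : Ghat // (A : V ≃ₗ[k] V) v = v}, ((σ (A₀ * s.1) : Ghat) : V ≃ₗ[k] V) w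
        = ∑ s : {A : Ghat // (A : V ≃ₗ[k] V) v = v}, ((A₀ * s.1 : Ghat) : V ≃ₗ[k] V) w := by
      intro A₀
      have hφmem : ∀ s : {A : Ghat // (A : V ≃ₗ[k] V) v = v},
          ((A₀⁻¹ * σ (A₀ * s.1) : Ghat) : V ≃ₗ[k] V) v = v := by
        intro s
        rw [coe_mul_apply, σfixv, coe_mul_apply, s.2]
        exact (A₀ : V ≃ₗ[k] V).symm_apply_apply v
      have hφinj : Function.Injective
          (fun s : {A : Ghat // (A : V ≃ₗ[k] V) v = v} =>
            (⟨A₀⁻¹ * σ (A₀ * s.1), hφmem s⟩ : {A : Ghat // (A : V ≃ₗ[k] V) v = v})) := by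
        intro s t hst
        have h1 : A₀⁻¹ * σ (A₀ * s.1) = A₀⁻¹ * σ (A₀ * t.1) := congrArg Subtype.val hst
        exact Subtype.ext (mul_left_cancel (σ.injective (mul_left_cancel h1)))
      exact Fintype.sum_bijective _ (Finite.injective_iff_bijective.mp hφinj) _ _
        (fun s => by
          show ((σ (A₀ * s.1) : Ghat) : V ≃ₗ[k] V) w
            = ((A₀ * (A₀⁻¹ * σ (A₀ * s.1)) : Ghat) : V ≃ₗ[k] V) w
          rw [mul_inv_cancel_left])
    have claim1 : ∀ A₀ : Ghat, ((σ A₀ : Ghat) : V ≃ₗ[k] V) w = (A₀ : V ≃ₗ[k] V) w := by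
      intro A₀
      set y : V := (m : k) • ((A₀ : V ≃ₗ[k] V) w)
        - ∑ s : {A : Ghat // (A : V ≃ₗ[k] V) v = v}, ((A₀ * s.1 : Ghat) : V ≃ₗ[k] V) w with hy
      set ss : V := (m : k) • (((σ A₀ : Ghat) : V ≃ₗ[k] V) w)
        - ∑ s : {A : Ghat // (A : V ≃ₗ[k] V) v = v}, ((σ (A₀ * s.1) : Ghat) : V ≃ₗ[k] V) w with hss
      set T : V →ₗ[k] V := (B₀.constr k) (fun i => ((α i : Ghat) : V ≃ₗ[k] V) w) with hT
      set Z : V →ₗ[k] V := (B₀.constr k) (fun i => ((σ (α i) : Ghat) : V ≃ₗ[k] V) w) with hZ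
      set MT := LinearMap.toMatrix B₀ B₀ T with hMT
      set MZ := LinearMap.toMatrix B₀ B₀ Z with hMZ
      set q : Polynomial k := ((1 : Matrix bset bset (Polynomial k))
        + (Polynomial.X : Polynomial k) • MT.map Polynomial.C).det with hq
      have hqeval : ∀ c : k, q.eval c = (1 + c • MT).det := by
        intro c
        rw [hq]
        have h1 := RingHom.map_det (Polynomial.evalRingHom c)
          ((1 : Matrix bset bset (Polynomial k)) + (Polynomial.X : Polynomial k) • MT.map Polynomial.C)
        rw [Polynomial.coe_evalRingHom] at h1
        rw [show (Polynomial.evalRingHom c).mapMatrix ((1 : Matrix bset bset (Polynomial k))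
            + (Polynomial.X : Polynomial k) • MT.map Polynomial.C)
            = ((1 : Matrix bset bset (Polynomial k))
            + (Polynomial.X : Polynomial k) • MT.map Polynomial.C).map (Polynomial.eval c)
          from rfl] at h1
        rw [h1, aux_map_one_add_smul]
      have hqne : q ≠ 0 := by
        intro h0
        have h1 := hqeval 0
        rw [h0] at h1
        rw [zero_smul, add_zero, Matrix.det_one] at h1
        simp at h1
      have hEinf : ({c : k | c ≠ 0 ∧ (1 + c • MT).det ≠ 0} : Set k).Infinite := by
        have hfin : ({(0 : k)} ∪ {c : k | q.IsRoot c}).Finite :=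
          (Set.finite_singleton 0).union (Polynomial.finite_setOf_isRoot hqne)
        apply Set.Infinite.mono _ hfin.infinite_compl
        intro c hc
        rw [Set.mem_compl_iff, Set.mem_union] at hc
        push_neg at hc
        refine ⟨by simpa using hc.1, ?_⟩
        rw [← hqeval c]
        exact hc.2
      have hmain : ∀ c ∈ ({c : k | c ≠ 0 ∧ (1 + c • MT).det ≠ 0} : Set k),
          (1 + c • MT).det ≠ 0 ∧
          ∃ h0 : bset → k, (1 + c • MT) *ᵥ h0 = ⇑(B₀.repr y)
            ∧ (1 + c • MZ) *ᵥ h0 = ⇑(B₀.repr ss) := by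
        rintro c ⟨hc0, hcdet⟩
        refine ⟨hcdet, ?_⟩
        set L : V →ₗ[k] V := LinearMap.id + c • T with hL
        have hLmat : LinearMap.toMatrix B₀ B₀ L = 1 + c • MT := by
          rw [hL, map_add, _root_.map_smul, LinearMap.toMatrix_id]
        set Linv : V →ₗ[k] V := (LinearMap.toMatrix B₀ B₀).symm ((1 + c • MT)⁻¹) with hLinvdef
        have hLinv : L ∘ₗ Linv = LinearMap.id := by
          apply (LinearMap.toMatrix B₀ B₀).injective
          rw [LinearMap.toMatrix_comp B₀ B₀ B₀, hLmat, LinearEquiv.apply_symm_apply,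
            Matrix.mul_nonsing_inv _ (isUnit_iff_ne_zero.mpr hcdet), LinearMap.toMatrix_id]
        have hLapp : ∀ x : V, L (Linv x) = x := by
          intro x
          have h2 := DFunLike.congr_fun hLinv x
          simpa using h2
        have hLbasis : ∀ i : ↑bset, L (B₀ i) = ((α i : Ghat) : V ≃ₗ[k] V) (v + c • w) := by
          intro i
          have h1 : T (B₀ i) = ((α i : Ghat) : V ≃ₗ[k] V) w := B₀.constr_basis k _ i
          show B₀ i + c • T (B₀ i) = _
          rw [h1, hB₀ i, map_add, _root_.map_smul]
        have hspanc : Submodule.span k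
            (Set.range fun A : Ghat => (A : V ≃ₗ[k] V) (v + c • w)) = ⊤ := by
          refine le_antisymm le_top ?_
          have h1 : (⊤ : Submodule k V) = Submodule.map L ⊤ := by
            rw [Submodule.map_top, LinearMap.range_eq_top.mpr (fun x => ⟨Linv x, hLapp x⟩)]
          rw [h1, ← B₀.span_eq, Submodule.map_span]
          apply Submodule.span_le.mpr
          rintro x2 ⟨y2, ⟨i, rfl⟩, rfl⟩
          apply Submodule.subset_span
          exact ⟨α i, (hLbasis i).symm⟩
        obtain ⟨D, hD⟩ := hwsym σ hCw (v + c • w) hspanc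
        have hexp : ∀ A : Ghat, (A : V ≃ₗ[k] V) (v + c • w)
            = (A : V ≃ₗ[k] V) v + c • (A : V ≃ₗ[k] V) w := fun A => by rw [map_add, _root_.map_smul]
        have hsv : ∀ s : {A : Ghat // (A : V ≃ₗ[k] V) v = v},
            ((A₀ * s.1 : Ghat) : V ≃ₗ[k] V) v = (A₀ : V ≃ₗ[k] V) v := by
          intro s
          rw [coe_mul_apply, s.2]
        have hconst : (∑ _s : {A : Ghat // (A : V ≃ₗ[k] V) v = v}, (A₀ : V ≃ₗ[k] V) v)
            = (m : k) • (A₀ : V ≃ₗ[k] V) v := by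
          rw [Finset.sum_const, Finset.card_univ, Nat.cast_smul_eq_nsmul, hm,
            Nat.card_eq_fintype_card]
        have e1 : ∀ s : {A : Ghat // (A : V ≃ₗ[k] V) v = v},
            ((A₀ * s.1 : Ghat) : V ≃ₗ[k] V) (v + c • w)
            = (A₀ : V ≃ₗ[k] V) v + c • ((A₀ * s.1 : Ghat) : V ≃ₗ[k] V) w := by
          intro s
          rw [hexp (A₀ * s.1), hsv s]
        have e2 : ∀ s : {A : Ghat // (A : V ≃ₗ[k] V) v = v},
            ((σ (A₀ * s.1) : Ghat) : V ≃ₗ[k] V) (v + c • w)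
            = (A₀ : V ≃ₗ[k] V) v + c • ((σ (A₀ * s.1) : Ghat) : V ≃ₗ[k] V) w := by
          intro s
          rw [hexp (σ (A₀ * s.1)), σfixv (A₀ * s.1), hsv s]
        have hsum1 : (∑ s : {A : Ghat // (A : V ≃ₗ[k] V) v = v},
              ((A₀ * s.1 : Ghat) : V ≃ₗ[k] V) (v + c • w))
            = (m : k) • ((A₀ : V ≃ₗ[k] V) v)
              + c • ∑ s : {A : Ghat // (A : V ≃ₗ[k] V) v = v},
                  ((A₀ * s.1 : Ghat) : V ≃ₗ[k] V) w := by
          simp only [e1]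
          rw [Finset.sum_add_distrib, hconst, ← Finset.smul_sum]
        have hsum2 : (∑ s : {A : Ghat // (A : V ≃ₗ[k] V) v = v},
              ((σ (A₀ * s.1) : Ghat) : V ≃ₗ[k] V) (v + c • w))
            = (m : k) • ((A₀ : V ≃ₗ[k] V) v)
              + c • ∑ s : {A : Ghat // (A : V ≃ₗ[k] V) v = v},
                  ((σ (A₀ * s.1) : Ghat) : V ≃ₗ[k] V) w := by
          simp only [e2]
          rw [Finset.sum_add_distrib, hconst, ← Finset.smul_sum]
        have hcy : c • y = (m : k) • ((A₀ : V ≃ₗ[k] V) (v + c • w))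
            - ∑ s : {A : Ghat // (A : V ≃ₗ[k] V) v = v},
                ((A₀ * s.1 : Ghat) : V ≃ₗ[k] V) (v + c • w) := by
          rw [hsum1, hexp A₀, hy]
          module
        have hcss : c • ss = (m : k) • ((σ A₀ : Ghat) : V ≃ₗ[k] V) (v + c • w)
            - ∑ s : {A : Ghat // (A : V ≃ₗ[k] V) v = v},
                ((σ (A₀ * s.1) : Ghat) : V ≃ₗ[k] V) (v + c • w) := by
          rw [hsum2, hexp (σ A₀), σfixv A₀, hss]
          module
        have hDy : D y = ss := by
          apply smul_right_injective V hc0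
          show c • D y = c • ss
          rw [hcss]
          calc c • D y = D (c • y) := (_root_.map_smul D c y).symm
          _ = D ((m : k) • ((A₀ : V ≃ₗ[k] V) (v + c • w))
              - ∑ s : {A : Ghat // (A : V ≃ₗ[k] V) v = v},
                  ((A₀ * s.1 : Ghat) : V ≃ₗ[k] V) (v + c • w)) := by rw [hcy]
          _ = (m : k) • D ((A₀ : V ≃ₗ[k] V) (v + c • w))
              - ∑ s : {A : Ghat // (A : V ≃ₗ[k] V) v = v},
                  D (((A₀ * s.1 : Ghat) : V ≃ₗ[k] V) (v + c • w)) := by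
            rw [map_sub, _root_.map_smul, map_sum]
          _ = (m : k) • ((σ A₀ : Ghat) : V ≃ₗ[k] V) (v + c • w)
              - ∑ s : {A : Ghat // (A : V ≃ₗ[k] V) v = v},
                  ((σ (A₀ * s.1) : Ghat) : V ≃ₗ[k] V) (v + c • w) := by
            rw [hD A₀]
            congr 1
            exact Finset.sum_congr rfl (fun s _ => hD (A₀ * s.1))
        refine ⟨⇑(B₀.repr (Linv y)), ?_, ?_⟩
        · rw [← hLmat, LinearMap.toMatrix_mulVec_repr, hLapp y]
        · have hLzmat : LinearMap.toMatrix B₀ B₀ ((LinearMap.id : V →ₗ[k] V) + c • Z) = 1 + c • MZ := by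
            rw [map_add, _root_.map_smul, LinearMap.toMatrix_id]
          have hcomp : (LinearMap.id : V →ₗ[k] V) + c • Z = (D : V →ₗ[k] V) ∘ₗ L := by
            apply B₀.ext
            intro i
            have h1 : Z (B₀ i) = ((σ (α i) : Ghat) : V ≃ₗ[k] V) w := B₀.constr_basis k _ i
            show B₀ i + c • Z (B₀ i) = D (L (B₀ i))
            rw [h1, hLbasis i, hD (α i), hexp (σ (α i)), σfixv (α i), hB₀ i]
          have h3 : ((LinearMap.id : V →ₗ[k] V) + c • Z) (Linv y) = ss := by
            rw [hcomp]
            show D (L (Linv y)) = ss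
            rw [hLapp y, hDy]
          rw [← hLzmat, LinearMap.toMatrix_mulVec_repr, h3]
      have hyss := key_poly_lemma MT MZ (⇑(B₀.repr y)) (⇑(B₀.repr ss)) _ hEinf hmain
      have h6 : B₀.repr y = B₀.repr ss := DFunLike.coe_injective hyss
      have hysseq : y = ss := B₀.repr.injective h6
      have hsum := hcoset A₀
      rw [hy, hss, hsum] at hysseq
      have h5 : (m : k) • ((A₀ : V ≃ₗ[k] V) w)
          = (m : k) • (((σ A₀ : Ghat) : V ≃ₗ[k] V) w) := sub_left_inj.mp hysseq
      exact (smul_right_injective V hchar h5).symm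
    have hBB' : ∀ A : Ghat, Bx ((A : V ≃ₗ[k] V) w) = B' ((A : V ≃ₗ[k] V) w) := by
      intro A
      rw [hπ A]
      have h1 : π A = b * σ A := by rw [hσ A, mul_inv_cancel_left]
      rw [h1, coe_mul_apply, claim1 A]
    have hEq : Bx = B' := by
      apply LinearEquiv.toLinearMap_injective
      apply LinearMap.ext_on hwgen
      rintro x ⟨A, rfl⟩
      exact hBB' A
    show Bx ∈ (Ghat : Set (V ≃ₗ[k] V))
    rw [hEq]
    exact bmem
  · -- easy direction
    intro hBx
    have hBm : Bx ∈ Ghat := hBx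
    set bb : Ghat := ⟨Bx, hBm⟩ with hbb
    apply Set.Subset.antisymm
    · rintro x ⟨y, ⟨A, rfl⟩, rfl⟩
      exact ⟨bb * A, rfl⟩
    · rintro x ⟨A, rfl⟩
      refine ⟨((bb⁻¹ * A : Ghat) : V ≃ₗ[k] V) w, ⟨bb⁻¹ * A, rfl⟩, ?_⟩
      show ((bb * (bb⁻¹ * A) : Ghat) : V ≃ₗ[k] V) w = (A : V ≃ₗ[k] V) w
      rw [mul_inv_cancel_left]
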